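/- Suppose T, U, V, Z are jointly distributed finite random variables with I(U;Z|T) = 0 and I(T;V|Z) = 0. Then RI((U,T);(V,Z)) ≥ RI(T;Z), where RI(A;B) = I(A;B) − CI_GK(A;B) is the residual information and CI_GK denotes the Gács–Körner common information. -/

import Mathlib

open scoped Classical

/-- A probability distribution on a finite sample space `Ω`. -/
structure FinProb (Ω : Type) [Fintype Ω] where
  p : Ω → ℝ
  nonneg : ∀ ω, 0 ≤ p ω
  sum_one : ∑ ω, p ω = 1

variable {Ω : Type} [Fintype Ω]

/-- `P(A = a)` for a random variable `A` on `(Ω, μ)`. -/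
noncomputable def prEq {α : Type} (μ : FinProb Ω) (A : Ω → α) (a : α) : ℝ :=
  ∑ ω, if A ω = a then μ.p ω else 0

/-- Shannon entropy (natural log) of a finite random variable. -/
noncomputable def ent {α : Type} [Fintype α] (μ : FinProb Ω) (A : Ω → α) : ℝ :=
  ∑ a, Real.negMulLog (prEq μ A a)

/-- Conditional entropy `H(A | B)`. -/
noncomputable def condEnt {α β : Type} [Fintype α] [Fintype β]
    (μ : FinProb Ω) (A : Ω → α) (B : Ω → β) : ℝ :=
  ent μ (fun ω => (A ω, B ω)) - ent μ B

/-- Mutual information `I(A ; B)`. -/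
noncomputable def mutInf {α β : Type} [Fintype α] [Fintype β]
    (μ : FinProb Ω) (A : Ω → α) (B : Ω → β) : ℝ :=
  ent μ A + ent μ B - ent μ (fun ω => (A ω, B ω))

/-- Conditional mutual information `I(A ; B | C)`. -/
noncomputable def condMutInf {α β γ : Type} [Fintype α] [Fintype β] [Fintype γ]
    (μ : FinProb Ω) (A : Ω → α) (B : Ω → β) (Cc : Ω → γ) : ℝ :=
  ent μ (fun ω => (A ω, Cc ω)) + ent μ (fun ω => (B ω, Cc ω))
    - ent μ (fun ω => (A ω, B ω, Cc ω)) - ent μ Cc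

/-- Gács–Körner common information `CI_GK(A ; B)`: the supremum of `H(Q)` over
random variables `Q` that are almost surely a deterministic function of `A`
and almost surely a deterministic function of `B`. -/
noncomputable def gkInf {α β : Type} [Fintype α] [Fintype β]
    (μ : FinProb Ω) (A : Ω → α) (B : Ω → β) : ℝ :=
  sSup { h : ℝ | ∃ (n : ℕ) (f : α → Fin n) (g : β → Fin n),
    (∀ ω, 0 < μ.p ω → f (A ω) = g (B ω)) ∧ h = ent μ (fun ω => f (A ω)) }

/-- Residual information `RI(A ; B) = I(A ; B) − CI_GK(A ; B)`. -/
noncomputable def resInf {α β : Type} [Fintype α] [Fintype β]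
    (μ : FinProb Ω) (A : Ω → α) (B : Ω → β) : ℝ :=
  mutInf μ A B - gkInf μ A B

section Lemmas
variable {α β γ : Type} (μ : FinProb Ω)

lemma prEq_nonneg (A : Ω → α) (a : α) : 0 ≤ prEq μ A a := by
  apply Finset.sum_nonneg; intro ω _; split_ifs
  · exact μ.nonneg ω
  · exact le_refl 0

lemma sum_prEq [Fintype α] (A : Ω → α) : ∑ a, prEq μ A a = 1 := by
  unfold prEq
  rw [Finset.sum_comm]
  rw [← μ.sum_one]
  apply Finset.sum_congr rfl; intro ω _
  simp

lemma prEq_congr {A B : Ω → α} (h : ∀ ω, 0 < μ.p ω → A ω = B ω) (a : α) :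
    prEq μ A a = prEq μ B a := by
  unfold prEq
  apply Finset.sum_congr rfl; intro ω _
  rcases eq_or_lt_of_le (μ.nonneg ω) with h0 | h0
  · split_ifs <;> simp [← h0]
  · rw [h ω h0]

lemma le_prEq (A : Ω → α) (ω₀ : Ω) : μ.p ω₀ ≤ prEq μ A (A ω₀) := by
  unfold prEq
  have := Finset.single_le_sum (f := fun ω => if A ω = A ω₀ then μ.p ω else 0)
    (fun ω _ => by split_ifs <;> simp [μ.nonneg ω]) (Finset.mem_univ ω₀)
  simpa using this

lemma prEq_comp (A : Ω → α) [Fintype α] (F : α → β) (b : β) :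
    prEq μ (fun ω => F (A ω)) b = ∑ a, if F a = b then prEq μ A a else 0 := by
  unfold prEq
  have step : ∀ a : α, (if F a = b then ∑ ω, if A ω = a then μ.p ω else 0 else 0)
      = ∑ ω, if A ω = a then (if F a = b then μ.p ω else 0) else 0 := by
    intro a; split_ifs with h
    · exact rfl
    · simp
  simp only [step]
  rw [Finset.sum_comm]
  apply Finset.sum_congr rfl; intro ω _
  simp

lemma prEq_pair_le_left (X : Ω → α) (Y : Ω → β) (x : α) (y : β) :
    prEq μ (fun ω => (X ω, Y ω)) (x, y) ≤ prEq μ X x := by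
  apply Finset.sum_le_sum; intro ω _
  split_ifs with h1 h2
  · exact le_refl _
  · exact absurd (Prod.ext_iff.mp h1).1 h2
  · exact μ.nonneg ω
  · exact le_refl _

end Lemmas

section EntLemmas
variable {α β : Type} (μ : FinProb Ω)

lemma ent_congr [Fintype α] {A B : Ω → α} (h : ∀ ω, 0 < μ.p ω → A ω = B ω) :
    ent μ A = ent μ B := by
  unfold ent
  exact Finset.sum_congr rfl (fun a _ => by rw [prEq_congr μ h a])

lemma ent_comp_inj [Fintype α] [Fintype β] (A : Ω → α) (Φ : α → β)
    (hΦ : Function.Injective Φ) : ent μ (fun ω => Φ (A ω)) = ent μ A := by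
  unfold ent
  have key : ∀ b, Real.negMulLog (prEq μ (fun ω => Φ (A ω)) b)
      = ∑ a, if Φ a = b then Real.negMulLog (prEq μ A a) else 0 := by
    intro b
    rw [prEq_comp]
    by_cases hb : ∃ a, Φ a = b
    · obtain ⟨a0, ha0⟩ := hb
      rw [Finset.sum_eq_single a0 (fun a _ ha => if_neg (fun hc => ha (hΦ (hc.trans ha0.symm))))
        (fun h => absurd (Finset.mem_univ a0) h),
        Finset.sum_eq_single a0 (fun a _ ha => if_neg (fun hc => ha (hΦ (hc.trans ha0.symm))))
        (fun h => absurd (Finset.mem_univ a0) h)]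
      rw [if_pos ha0, if_pos ha0]
    · push_neg at hb
      rw [Finset.sum_eq_zero (fun a _ => if_neg (hb a)),
        Finset.sum_eq_zero (fun a _ => if_neg (hb a)), Real.negMulLog_zero]
  simp only [key]
  rw [Finset.sum_comm]
  apply Finset.sum_congr rfl; intro a _
  simp

lemma negMulLog_sum_le {ι : Type} (s : Finset ι) (x : ι → ℝ) (hx : ∀ i ∈ s, 0 ≤ x i) :
    Real.negMulLog (∑ i ∈ s, x i) ≤ ∑ i ∈ s, Real.negMulLog (x i) := by
  have hS : 0 ≤ ∑ i ∈ s, x i := Finset.sum_nonneg hx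
  rcases eq_or_lt_of_le hS with h0 | h0
  · have hz : ∀ i ∈ s, x i = 0 := (Finset.sum_eq_zero_iff_of_nonneg hx).mp h0.symm
    rw [← h0, Finset.sum_congr rfl (fun i hi => by rw [hz i hi])]
    simp [Real.negMulLog_zero]
  · have expand : Real.negMulLog (∑ i ∈ s, x i)
        = ∑ i ∈ s, x i * (-Real.log (∑ j ∈ s, x j)) := by
      rw [← Finset.sum_mul, Real.negMulLog]; ring
    rw [expand]
    apply Finset.sum_le_sum; intro i hi
    rcases eq_or_lt_of_le (hx i hi) with hxi | hxi
    · rw [← hxi]; simp [Real.negMulLog_zero]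
    · have hle : Real.log (x i) ≤ Real.log (∑ j ∈ s, x j) :=
        Real.log_le_log hxi (Finset.single_le_sum hx hi)
      rw [Real.negMulLog]
      nlinarith
end EntLemmas

section EntLemmas2
variable {α β : Type} (μ : FinProb Ω)

lemma ent_comp_le [Fintype α] [Fintype β] (A : Ω → α) (F : α → β) :
    ent μ (fun ω => F (A ω)) ≤ ent μ A := by
  unfold ent
  calc ∑ b, Real.negMulLog (prEq μ (fun ω => F (A ω)) b)
      = ∑ b, Real.negMulLog (∑ a, if F a = b then prEq μ A a else 0) := by
        exact Finset.sum_congr rfl (fun b _ => by rw [prEq_comp])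
    _ ≤ ∑ b, ∑ a, Real.negMulLog (if F a = b then prEq μ A a else 0) := by
        apply Finset.sum_le_sum; intro b _
        apply negMulLog_sum_le
        intro a _; split_ifs
        · exact prEq_nonneg μ A a
        · exact le_refl 0
    _ = ∑ b, ∑ a, if F a = b then Real.negMulLog (prEq μ A a) else 0 := by
        apply Finset.sum_congr rfl; intro b _
        apply Finset.sum_congr rfl; intro a _
        split_ifs <;> simp [Real.negMulLog_zero]
    _ = ∑ a, Real.negMulLog (prEq μ A a) := by
        rw [Finset.sum_comm]
        apply Finset.sum_congr rfl; intro a _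
        simp

lemma ent_pair_det [Fintype α] [Fintype β] {A : Ω → α} {B : Ω → β} (r : α → β)
    (h : ∀ ω, 0 < μ.p ω → B ω = r (A ω)) :
    ent μ (fun ω => (A ω, B ω)) = ent μ A := by
  have e1 : ent μ (fun ω => (A ω, B ω)) = ent μ (fun ω => (A ω, r (A ω))) :=
    ent_congr μ (fun ω hω => by rw [h ω hω])
  rw [e1]
  exact ent_comp_inj μ A (fun a => (a, r a)) (fun a a' hh => (Prod.ext_iff.mp hh).1)

lemma ent_det_congr [Fintype α] [Fintype β] {X : Ω → α} {Y : Ω → β} (r : α → β) (s : β → α)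
    (hr : ∀ ω, 0 < μ.p ω → r (X ω) = Y ω) (hs : ∀ ω, 0 < μ.p ω → s (Y ω) = X ω) :
    ent μ X = ent μ Y := by
  have h1 : ent μ (fun ω => (X ω, Y ω)) = ent μ X :=
    ent_pair_det μ r (fun ω h => (hr ω h).symm)
  have h2 : ent μ (fun ω => (Y ω, X ω)) = ent μ Y :=
    ent_pair_det μ s (fun ω h => (hs ω h).symm)
  have h3 : ent μ (fun ω => (Y ω, X ω)) = ent μ (fun ω => (X ω, Y ω)) :=
    ent_comp_inj μ (fun ω => (X ω, Y ω)) Prod.swap Prod.swap_injective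
  linarith
end EntLemmas2

section Pointwise

lemma pt_main {xv Uv Vv Wv : ℝ} (hx : 0 < xv) (hU : xv ≤ Uv) (hV : xv ≤ Vv) (hW : xv ≤ Wv) :
    xv - Uv*Vv/Wv ≤ xv * (Real.log xv + Real.log Wv - Real.log Uv - Real.log Vv)
    ∧ (xv * (Real.log xv + Real.log Wv - Real.log Uv - Real.log Vv) = xv - Uv*Vv/Wv
        → xv * Wv = Uv * Vv) := by
  have hU0 : 0 < Uv := lt_of_lt_of_le hx hU
  have hV0 : 0 < Vv := lt_of_lt_of_le hx hV
  have hW0 : 0 < Wv := lt_of_lt_of_le hx hW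
  have hY0 : 0 < Uv*Vv/Wv := by positivity
  have hexp : Real.log (Uv*Vv/Wv/xv)
      = Real.log Uv + Real.log Vv - Real.log Wv - Real.log xv := by
    rw [Real.log_div hY0.ne' hx.ne', Real.log_div (by positivity) hW0.ne',
      Real.log_mul hU0.ne' hV0.ne']
  have hcancel : xv * (Uv*Vv/Wv/xv) = Uv*Vv/Wv := by
    field_simp
  have hr : xv * (Real.log xv + Real.log Wv - Real.log Uv - Real.log Vv)
      = -(xv * (Real.log (Uv*Vv/Wv/xv))) := by
    rw [hexp]; ring
  constructor
  · have h1 : Real.log (Uv*Vv/Wv/xv) ≤ Uv*Vv/Wv/xv - 1 :=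
      Real.log_le_sub_one_of_pos (by positivity)
    have h2 : xv * Real.log (Uv*Vv/Wv/xv) ≤ xv * (Uv*Vv/Wv/xv - 1) :=
      mul_le_mul_of_nonneg_left h1 hx.le
    rw [mul_sub, hcancel] at h2
    linarith
  · intro heq
    rw [hr] at heq
    by_cases hone : Uv*Vv/Wv/xv = 1
    · field_simp at hone; linarith [hone]
    · exfalso
      have h1 : Real.log (Uv*Vv/Wv/xv) < Uv*Vv/Wv/xv - 1 :=
        Real.log_lt_sub_one_of_pos (by positivity) hone
      have h2 : xv * Real.log (Uv*Vv/Wv/xv) < xv * (Uv*Vv/Wv/xv - 1) :=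
        (mul_lt_mul_iff_right₀ hx).mpr h1
    -- heq : -(xv * log(Y/x)) = xv - Y
      rw [mul_sub, hcancel] at h2
      linarith

end Pointwise

section Core
variable {α β γ : Type} [Fintype α] [Fintype β] [Fintype γ]

/-- marginal over `b` -/
noncomputable def mU (x : α → β → γ → ℝ) (a : α) (c : γ) : ℝ := ∑ b, x a b c
/-- marginal over `a` -/
noncomputable def mV (x : α → β → γ → ℝ) (b : β) (c : γ) : ℝ := ∑ a, x a b c
/-- marginal over `a, b` -/
noncomputable def mW (x : α → β → γ → ℝ) (c : γ) : ℝ := ∑ a, ∑ b, x a b c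

noncomputable def Dfun (x : α → β → γ → ℝ) : ℝ :=
  (∑ c, ∑ a, Real.negMulLog (mU x a c))
  + (∑ c, ∑ b, Real.negMulLog (mV x b c))
  - (∑ c, ∑ a, ∑ b, Real.negMulLog (x a b c))
  - (∑ c, Real.negMulLog (mW x c))

noncomputable def tTerm (x : α → β → γ → ℝ) (a : α) (b : β) (c : γ) : ℝ :=
  x a b c * (Real.log (x a b c) + Real.log (mW x c)
    - Real.log (mU x a c) - Real.log (mV x b c))

noncomputable def yTerm (x : α → β → γ → ℝ) (a : α) (b : β) (c : γ) : ℝ :=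
  mU x a c * mV x b c / mW x c

lemma Dfun_eq_sum (x : α → β → γ → ℝ) :
    Dfun x = ∑ c, ∑ a, ∑ b, tTerm x a b c := by
  unfold Dfun
  rw [← Finset.sum_add_distrib, ← Finset.sum_sub_distrib, ← Finset.sum_sub_distrib]
  apply Finset.sum_congr rfl; intro c _
  have e1 : ∑ a, Real.negMulLog (mU x a c)
      = ∑ a, ∑ b, x a b c * (-Real.log (mU x a c)) := by
    apply Finset.sum_congr rfl; intro a _
    rw [← Finset.sum_mul]
    show Real.negMulLog (mU x a c) = (mU x a c) * _
    rw [Real.negMulLog]; ring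
  have e2 : ∑ b, Real.negMulLog (mV x b c)
      = ∑ a, ∑ b, x a b c * (-Real.log (mV x b c)) := by
    rw [Finset.sum_comm]
    apply Finset.sum_congr rfl; intro b _
    rw [← Finset.sum_mul]
    show Real.negMulLog (mV x b c) = (mV x b c) * _
    rw [Real.negMulLog]; ring
  have e3 : Real.negMulLog (mW x c)
      = ∑ a, ∑ b, x a b c * (-Real.log (mW x c)) := by
    have : ∀ a : α, ∑ b, x a b c * (-Real.log (mW x c))
        = (∑ b, x a b c) * (-Real.log (mW x c)) := by
      intro a; rw [← Finset.sum_mul]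
    simp only [this]
    rw [← Finset.sum_mul]
    show Real.negMulLog (mW x c) = (mW x c) * _
    rw [Real.negMulLog]; ring
  have e4 : ∑ a, ∑ b, Real.negMulLog (x a b c)
      = ∑ a, ∑ b, (-(x a b c * Real.log (x a b c))) := by
    apply Finset.sum_congr rfl; intro a _
    apply Finset.sum_congr rfl; intro b _
    rw [Real.negMulLog]; ring
  rw [e1, e2, e3, e4]
  rw [← Finset.sum_add_distrib, ← Finset.sum_sub_distrib, ← Finset.sum_sub_distrib]
  apply Finset.sum_congr rfl; intro a _
  rw [← Finset.sum_add_distrib, ← Finset.sum_sub_distrib, ← Finset.sum_sub_distrib]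
  apply Finset.sum_congr rfl; intro b _
  rw [tTerm]; ring

lemma marg_le {x : α → β → γ → ℝ} (hx : ∀ a b c, 0 ≤ x a b c) (a : α) (b : β) (c : γ) :
    x a b c ≤ mU x a c ∧ x a b c ≤ mV x b c ∧ x a b c ≤ mW x c ∧ mU x a c ≤ mW x c := by
  have h1 : x a b c ≤ mU x a c :=
    Finset.single_le_sum (fun b' _ => hx a b' c) (Finset.mem_univ b)
  have h4 : mU x a c ≤ mW x c :=
    Finset.single_le_sum (f := fun a' => ∑ b', x a' b' c)
      (fun a' _ => Finset.sum_nonneg (fun b' _ => hx a' b' c)) (Finset.mem_univ a)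
  exact ⟨h1,
    Finset.single_le_sum (fun a' _ => hx a' b c) (Finset.mem_univ a),
    le_trans h1 h4, h4⟩

lemma mU_nonneg {x : α → β → γ → ℝ} (hx : ∀ a b c, 0 ≤ x a b c) (a : α) (c : γ) :
    0 ≤ mU x a c := Finset.sum_nonneg (fun b _ => hx a b c)
lemma mV_nonneg {x : α → β → γ → ℝ} (hx : ∀ a b c, 0 ≤ x a b c) (b : β) (c : γ) :
    0 ≤ mV x b c := Finset.sum_nonneg (fun a _ => hx a b c)
lemma mW_nonneg {x : α → β → γ → ℝ} (hx : ∀ a b c, 0 ≤ x a b c) (c : γ) :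
    0 ≤ mW x c := Finset.sum_nonneg (fun a _ => mU_nonneg hx a c)

lemma tTerm_ge {x : α → β → γ → ℝ} (hx : ∀ a b c, 0 ≤ x a b c) (a : α) (b : β) (c : γ) :
    x a b c - yTerm x a b c ≤ tTerm x a b c := by
  obtain ⟨h1, h2, h3, _⟩ := marg_le hx a b c
  rcases eq_or_lt_of_le (hx a b c) with h0 | h0
  · rw [tTerm, ← h0]
    have : 0 ≤ yTerm x a b c := by
      rw [yTerm]
      exact div_nonneg (mul_nonneg (mU_nonneg hx a c) (mV_nonneg hx b c)) (mW_nonneg hx c)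
    simp; linarith
  · exact (pt_main h0 h1 h2 h3).1

lemma sum_yTerm_le {x : α → β → γ → ℝ} (hx : ∀ a b c, 0 ≤ x a b c) (c : γ) :
    ∑ a, ∑ b, yTerm x a b c ≤ mW x c := by
  have step : ∀ a, ∑ b, yTerm x a b c = mU x a c * (∑ b, mV x b c) / mW x c := by
    intro a
    rw [Finset.mul_sum, Finset.sum_div]
    rfl
  simp only [step]
  rw [← Finset.sum_div, ← Finset.sum_mul]
  have hU : ∑ a, mU x a c = mW x c := rfl
  have hV : ∑ b, mV x b c = mW x c := Finset.sum_comm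
  rw [hU, hV]
  rcases eq_or_ne (mW x c) 0 with h | h
  · rw [h]; simp
  · rw [mul_div_assoc, div_self h, mul_one]

lemma Dfun_nonneg {x : α → β → γ → ℝ} (hx : ∀ a b c, 0 ≤ x a b c) : 0 ≤ Dfun x := by
  rw [Dfun_eq_sum]
  have step : ∀ c, mW x c - ∑ a, ∑ b, yTerm x a b c ≤ ∑ a, ∑ b, tTerm x a b c := by
    intro c
    have h1 : ∑ a, ∑ b, (x a b c - yTerm x a b c) ≤ ∑ a, ∑ b, tTerm x a b c :=
      Finset.sum_le_sum (fun a _ => Finset.sum_le_sum (fun b _ => tTerm_ge hx a b c))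
    have h2 : ∑ a, ∑ b, (x a b c - yTerm x a b c)
        = mW x c - ∑ a, ∑ b, yTerm x a b c := by
      simp only [Finset.sum_sub_distrib]
      rfl
    linarith [h2 ▸ h1]
  have : ∑ c, (mW x c - ∑ a, ∑ b, yTerm x a b c) ≤ ∑ c, ∑ a, ∑ b, tTerm x a b c :=
    Finset.sum_le_sum (fun c _ => step c)
  have hpos : 0 ≤ ∑ c, (mW x c - ∑ a, ∑ b, yTerm x a b c) :=
    Finset.sum_nonneg (fun c _ => by linarith [sum_yTerm_le hx c])
  linarith

end Core

section CoreZero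
variable {α β γ : Type} [Fintype α] [Fintype β] [Fintype γ]

lemma sum_sub_yTerm (x : α → β → γ → ℝ) (c : γ) :
    ∑ a, ∑ b, (x a b c - yTerm x a b c) = mW x c - ∑ a, ∑ b, yTerm x a b c := by
  simp only [Finset.sum_sub_distrib]
  rfl

lemma factorization_of_Dfun_eq_zero {x : α → β → γ → ℝ} (hx : ∀ a b c, 0 ≤ x a b c)
    (hD : Dfun x = 0) :
    ∀ a b c, x a b c * mW x c = mU x a c * mV x b c := by
  have hflat_t : ∑ q : γ × α × β, tTerm x q.2.1 q.2.2 q.1 = 0 := by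
    simp only [Fintype.sum_prod_type]
    rw [← Dfun_eq_sum]; exact hD
  have hflat_le : ∀ q : γ × α × β,
      x q.2.1 q.2.2 q.1 - yTerm x q.2.1 q.2.2 q.1 ≤ tTerm x q.2.1 q.2.2 q.1 :=
    fun q => tTerm_ge hx q.2.1 q.2.2 q.1
  have hflat_f : 0 ≤ ∑ q : γ × α × β, (x q.2.1 q.2.2 q.1 - yTerm x q.2.1 q.2.2 q.1) := by
    simp only [Fintype.sum_prod_type]
    apply Finset.sum_nonneg; intro c _
    rw [sum_sub_yTerm]
    linarith [sum_yTerm_le hx c]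
  have hsums : ∑ q : γ × α × β, (x q.2.1 q.2.2 q.1 - yTerm x q.2.1 q.2.2 q.1)
      = ∑ q : γ × α × β, tTerm x q.2.1 q.2.2 q.1 := by
    have h1 := Finset.sum_le_sum (fun q (_ : q ∈ Finset.univ) => hflat_le q)
    rw [hflat_t]; linarith [hflat_t ▸ h1]
  have hterm := (Finset.sum_eq_sum_iff_of_le (fun q (_ : q ∈ Finset.univ) => hflat_le q)).mp hsums
  intro a b c
  have heq : x a b c - yTerm x a b c = tTerm x a b c :=
    hterm (c, a, b) (Finset.mem_univ _)
  obtain ⟨h1, h2, h3, h4⟩ := marg_le hx a b c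
  rcases eq_or_lt_of_le (hx a b c) with h0 | h0
  · have ht0 : tTerm x a b c = 0 := by rw [tTerm, ← h0]; ring
    have hy0 : yTerm x a b c = 0 := by rw [ht0] at heq; linarith
    rcases eq_or_ne (mW x c) 0 with hW | hW
    · have hU0 : mU x a c = 0 := le_antisymm (hW ▸ h4) (mU_nonneg hx a c)
      rw [← h0, hU0]; ring
    · rw [yTerm, div_eq_zero_iff] at hy0
      rcases hy0 with hy0 | hy0
      · rw [← h0, hy0]; ring
      · exact absurd hy0 hW
  · exact (pt_main h0 h1 h2 h3).2 heq.symm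

lemma Dfun_eq_zero_of_factorization {x : α → β → γ → ℝ} (hx : ∀ a b c, 0 ≤ x a b c)
    (hf : ∀ a b c, x a b c * mW x c = mU x a c * mV x b c) : Dfun x = 0 := by
  rw [Dfun_eq_sum]
  apply Finset.sum_eq_zero; intro c _
  apply Finset.sum_eq_zero; intro a _
  apply Finset.sum_eq_zero; intro b _
  obtain ⟨h1, h2, h3, _⟩ := marg_le hx a b c
  rcases eq_or_lt_of_le (hx a b c) with h0 | h0
  · rw [tTerm, ← h0]; ring
  · have hU0 : 0 < mU x a c := lt_of_lt_of_le h0 h1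
    have hV0 : 0 < mV x b c := lt_of_lt_of_le h0 h2
    have hW0 : 0 < mW x c := lt_of_lt_of_le h0 h3
    have hlog : Real.log (x a b c) + Real.log (mW x c)
        = Real.log (mU x a c) + Real.log (mV x b c) := by
      rw [← Real.log_mul h0.ne' hW0.ne', ← Real.log_mul hU0.ne' hV0.ne', hf a b c]
    rw [tTerm, show Real.log (x a b c) + Real.log (mW x c)
        - Real.log (mU x a c) - Real.log (mV x b c) = 0 from by linarith, mul_zero]

end CoreZero

section Bridge
variable {α β γ : Type} [Fintype α] [Fintype β] [Fintype γ] (μ : FinProb Ω)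
variable (A : Ω → α) (B : Ω → β) (C : Ω → γ)

lemma prEq_AC (a : α) (c : γ) :
    prEq μ (fun ω => (A ω, C ω)) (a, c)
      = ∑ b, prEq μ (fun ω => (A ω, B ω, C ω)) (a, b, c) := by
  unfold prEq
  rw [Finset.sum_comm]
  apply Finset.sum_congr rfl; intro ω _
  rw [Finset.sum_eq_single (B ω)]
  · simp [Prod.ext_iff]
  · intro b _ hb
    apply if_neg; intro hcontra
    exact hb (Prod.ext_iff.mp (Prod.ext_iff.mp hcontra).2).1.symm
  · intro h; exact absurd (Finset.mem_univ _) h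

lemma prEq_BC (b : β) (c : γ) :
    prEq μ (fun ω => (B ω, C ω)) (b, c)
      = ∑ a, prEq μ (fun ω => (A ω, B ω, C ω)) (a, b, c) := by
  unfold prEq
  rw [Finset.sum_comm]
  apply Finset.sum_congr rfl; intro ω _
  rw [Finset.sum_eq_single (A ω)]
  · simp [Prod.ext_iff]
  · intro a _ ha
    apply if_neg; intro hcontra
    exact ha (Prod.ext_iff.mp hcontra).1.symm
  · intro h; exact absurd (Finset.mem_univ _) h

lemma prEq_C (c : γ) :
    prEq μ C c = ∑ a, ∑ b, prEq μ (fun ω => (A ω, B ω, C ω)) (a, b, c) := by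
  have e : ∀ a, ∑ b, prEq μ (fun ω => (A ω, B ω, C ω)) (a, b, c)
      = prEq μ (fun ω => (A ω, C ω)) (a, c) := fun a => (prEq_AC μ A B C a c).symm
  simp only [e]
  unfold prEq
  rw [Finset.sum_comm]
  apply Finset.sum_congr rfl; intro ω _
  rw [Finset.sum_eq_single (A ω)]
  · simp [Prod.ext_iff]
  · intro a _ ha
    apply if_neg; intro hcontra
    exact ha (Prod.ext_iff.mp hcontra).1.symm
  · intro h; exact absurd (Finset.mem_univ _) h

lemma condMutInf_eq_Dfun :
    condMutInf μ A B C
      = Dfun (fun a b c => prEq μ (fun ω => (A ω, B ω, C ω)) (a, b, c)) := by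
  unfold condMutInf
  have e1 : ent μ (fun ω => (A ω, C ω))
      = ∑ c, ∑ a, Real.negMulLog (mU (fun a b c => prEq μ (fun ω => (A ω, B ω, C ω)) (a, b, c)) a c) := by
    rw [ent, Fintype.sum_prod_type, Finset.sum_comm]
    apply Finset.sum_congr rfl; intro c _
    apply Finset.sum_congr rfl; intro a _
    rw [prEq_AC μ A B C a c]; rfl
  have e2 : ent μ (fun ω => (B ω, C ω))
      = ∑ c, ∑ b, Real.negMulLog (mV (fun a b c => prEq μ (fun ω => (A ω, B ω, C ω)) (a, b, c)) b c) := by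
    rw [ent, Fintype.sum_prod_type, Finset.sum_comm]
    apply Finset.sum_congr rfl; intro c _
    apply Finset.sum_congr rfl; intro b _
    rw [prEq_BC μ A B C b c]; rfl
  have e3 : ent μ (fun ω => (A ω, B ω, C ω))
      = ∑ c, ∑ a, ∑ b, Real.negMulLog (prEq μ (fun ω => (A ω, B ω, C ω)) (a, b, c)) := by
    rw [ent]
    simp only [Fintype.sum_prod_type]
    have swap_inner : (∑ a : α, ∑ b : β, ∑ c : γ,
        Real.negMulLog (prEq μ (fun ω => (A ω, B ω, C ω)) (a, b, c)))
        = ∑ a : α, ∑ c : γ, ∑ b : β,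
        Real.negMulLog (prEq μ (fun ω => (A ω, B ω, C ω)) (a, b, c)) :=
      Finset.sum_congr rfl (fun a _ => Finset.sum_comm)
    rw [swap_inner, Finset.sum_comm]
  have e4 : ent μ C
      = ∑ c, Real.negMulLog (mW (fun a b c => prEq μ (fun ω => (A ω, B ω, C ω)) (a, b, c)) c) := by
    rw [ent]
    apply Finset.sum_congr rfl; intro c _
    rw [prEq_C μ A B C c]; rfl
  rw [e1, e2, e3, e4, Dfun]

lemma condMutInf_nonneg : 0 ≤ condMutInf μ A B C := by
  rw [condMutInf_eq_Dfun]
  exact Dfun_nonneg (fun a b c => prEq_nonneg μ _ _)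

lemma factorization_of_condMutInf_eq_zero (h : condMutInf μ A B C = 0) :
    ∀ a b c, prEq μ (fun ω => (A ω, B ω, C ω)) (a, b, c) * prEq μ C c
      = prEq μ (fun ω => (A ω, C ω)) (a, c) * prEq μ (fun ω => (B ω, C ω)) (b, c) := by
  rw [condMutInf_eq_Dfun] at h
  have := factorization_of_Dfun_eq_zero (fun a b c => prEq_nonneg μ _ _) h
  intro a b c
  have h2 := this a b c
  rw [prEq_AC μ A B C a c, prEq_BC μ A B C b c, prEq_C μ A B C c]
  exact h2

lemma condMutInf_eq_zero_of_factorization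
    (h : ∀ a b c, prEq μ (fun ω => (A ω, B ω, C ω)) (a, b, c) * prEq μ C c
      = prEq μ (fun ω => (A ω, C ω)) (a, c) * prEq μ (fun ω => (B ω, C ω)) (b, c)) :
    condMutInf μ A B C = 0 := by
  rw [condMutInf_eq_Dfun]
  apply Dfun_eq_zero_of_factorization (fun a b c => prEq_nonneg μ _ _)
  intro a b c
  have h2 := h a b c
  rw [prEq_AC μ A B C a c, prEq_BC μ A B C b c, prEq_C μ A B C c] at h2
  exact h2

end Bridge

section MorePr
variable {α β : Type} (μ : FinProb Ω)

lemma prEq_swap (X : Ω → α) (Y : Ω → β) (x : α) (y : β) :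
    prEq μ (fun ω => (X ω, Y ω)) (x, y) = prEq μ (fun ω => (Y ω, X ω)) (y, x) := by
  unfold prEq
  apply Finset.sum_congr rfl; intro ω _
  split_ifs with h1 h2 h2 <;> simp_all [Prod.ext_iff]

lemma prEq_comp_inj (X : Ω → α) (Φ : α → β) (hΦ : Function.Injective Φ) (s : α) :
    prEq μ (fun ω => Φ (X ω)) (Φ s) = prEq μ X s := by
  unfold prEq
  apply Finset.sum_congr rfl; intro ω _
  split_ifs with h1 h2 h2
  · rfl
  · exact absurd (hΦ h1) h2
  · exact absurd (congrArg Φ h2) h1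
  · rfl

lemma prEq_eq_zero_of_not_range (X : Ω → α) (Φ : α → β) (y : β) (hy : ∀ x, Φ x ≠ y) :
    prEq μ (fun ω => Φ (X ω)) y = 0 := by
  unfold prEq
  apply Finset.sum_eq_zero; intro ω _
  exact if_neg (hy (X ω))

lemma prEq_fiber {χ σ κ : Type} [Fintype χ] (E : Ω → χ) (S : Ω → σ) (G : χ → σ → κ)
    (s : σ) (k : κ) :
    prEq μ (fun ω => (S ω, G (E ω) (S ω))) (s, k)
      = ∑ e, if G e s = k then prEq μ (fun ω => (E ω, S ω)) (e, s) else 0 := by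
  have expand : ∀ {τ : Type} (X : Ω → τ) (tv : τ), prEq μ X tv = ∑ ω, if X ω = tv then μ.p ω else 0 := fun X tv => rfl
  rw [expand]
  have step : ∀ e : χ, (if G e s = k then prEq μ (fun ω => (E ω, S ω)) (e, s) else 0)
      = ∑ ω, (if G e s = k then (if (E ω, S ω) = (e, s) then μ.p ω else 0) else 0) := by
    intro e
    rw [expand]
    split_ifs with h
    · exact Finset.sum_congr rfl (fun ω _ => by split_ifs <;> simp_all)
    · simp
  rw [Finset.sum_congr rfl (fun e (_ : e ∈ Finset.univ) => step e)]
  conv_rhs => rw [Finset.sum_comm]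
  apply Finset.sum_congr rfl; intro ω _
  rw [Finset.sum_eq_single (E ω)]
  · by_cases hs : S ω = s
    · rw [hs]; simp [Prod.ext_iff]
    · simp [hs, Prod.ext_iff]
  · intro e _ he
    split_ifs with h1 h2
    · exact absurd (Prod.ext_iff.mp h2).1.symm he
    · rfl
    · rfl
  · intro hmem; exact absurd (Finset.mem_univ _) hmem

end MorePr

section Star
variable {X Y E' : Type} [Fintype X] [Fintype Y] [Fintype E'] {n : ℕ}

/-- Generic "star" identity: if `Q` is a.s. a function of `(E,X)` and
`E ⟂ Y | X`, then `P(X=x,Y=y,Q=q) * P(X=x) = P(X=x,Q=q) * P(Y=y,X=x)`. -/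
lemma star_generic (μ : FinProb Ω) (fX : Ω → X) (fY : Ω → Y) (fE : Ω → E')
    (Q : Ω → Fin n) (f' : E' × X → Fin n)
    (hQ : ∀ ω, 0 < μ.p ω → Q ω = f' (fE ω, fX ω))
    (hfact : ∀ e y x, prEq μ (fun ω => (fE ω, fY ω, fX ω)) (e, y, x) * prEq μ fX x
        = prEq μ (fun ω => (fE ω, fX ω)) (e, x) * prEq μ (fun ω => (fY ω, fX ω)) (y, x))
    (x : X) (y : Y) (q : Fin n) :
    prEq μ (fun ω => (fX ω, fY ω, Q ω)) (x, y, q) * prEq μ fX x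
      = prEq μ (fun ω => (fX ω, Q ω)) (x, q) * prEq μ (fun ω => (fY ω, fX ω)) (y, x) := by
  -- replace Q by its exact representative
  have hc1 : prEq μ (fun ω => (fX ω, fY ω, Q ω)) (x, y, q)
      = prEq μ (fun ω => (fX ω, fY ω, f' (fE ω, fX ω))) (x, y, q) :=
    prEq_congr μ (fun ω hω => by rw [hQ ω hω]) _
  have hc2 : prEq μ (fun ω => (fX ω, Q ω)) (x, q)
      = prEq μ (fun ω => (fX ω, f' (fE ω, fX ω))) (x, q) :=
    prEq_congr μ (fun ω hω => by rw [hQ ω hω]) _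
  rw [hc1, hc2]
  have e1 : prEq μ (fun ω => (fX ω, fY ω, f' (fE ω, fX ω))) (x, y, q)
      = prEq μ (fun ω => ((fY ω, fX ω), f' (fE ω, fX ω))) ((y, x), q) :=
    (prEq_comp_inj μ (fun ω => ((fY ω, fX ω), f' (fE ω, fX ω)))
      (fun p => (p.1.2, p.1.1, p.2))
      (fun p p' hp => by
        obtain ⟨⟨y1, x1⟩, q1⟩ := p; obtain ⟨⟨y2, x2⟩, q2⟩ := p'
        simp_all [Prod.ext_iff]) ((y, x), q))
  have e2 := prEq_fiber μ fE (fun ω => (fY ω, fX ω)) (fun e p => f' (e, p.2)) (y, x) q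
  have e3 := prEq_fiber μ fE fX (fun e x' => f' (e, x')) x q
  dsimp only at e2 e3
  rw [e1, e2, e3, Finset.sum_mul, Finset.sum_mul]
  apply Finset.sum_congr rfl; intro e _
  split_ifs with h
  · exact hfact e y x
  · ring
end Star

section KeyBound
variable {T U V Z : Type} [Fintype T] [Fintype U] [Fintype V] [Fintype Z]

lemma key_bound (μ : FinProb Ω) (fT : Ω → T) (fU : Ω → U) (fV : Ω → V) (fZ : Ω → Z)
    (h1 : condMutInf μ fU fZ fT = 0) (h2 : condMutInf μ fT fV fZ = 0)
    (n : ℕ) (f : U × T → Fin n) (g : V × Z → Fin n)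
    (hfg : ∀ ω, 0 < μ.p ω → f (fU ω, fT ω) = g (fV ω, fZ ω)) :
    ent μ (fun ω => f (fU ω, fT ω))
      ≤ mutInf μ (fun ω => (fU ω, fT ω)) (fun ω => (fV ω, fZ ω))
        - mutInf μ fT fZ + gkInf μ fT fZ := by
  classical
  -- the two factorizations from the privacy conditions
  have fact1 := factorization_of_condMutInf_eq_zero μ fU fZ fT h1
  have fact2 := factorization_of_condMutInf_eq_zero μ fT fV fZ h2
  -- star identities
  have star1 : ∀ (t : T) (z : Z) (q : Fin n),
      prEq μ (fun ω => (fT ω, fZ ω, f (fU ω, fT ω))) (t, z, q) * prEq μ fT t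
        = prEq μ (fun ω => (fT ω, f (fU ω, fT ω))) (t, q)
          * prEq μ (fun ω => (fZ ω, fT ω)) (z, t) := by
    intro t z q
    exact star_generic μ fT fZ fU (fun ω => f (fU ω, fT ω)) f
      (fun ω _ => rfl) (fun e y x => fact1 e y x) t z q
  have star2 : ∀ (z : Z) (t : T) (q : Fin n),
      prEq μ (fun ω => (fZ ω, fT ω, f (fU ω, fT ω))) (z, t, q) * prEq μ fZ z
        = prEq μ (fun ω => (fZ ω, f (fU ω, fT ω))) (z, q)
          * prEq μ (fun ω => (fT ω, fZ ω)) (t, z) := by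
    intro z t q
    apply star_generic μ fZ fT fV (fun ω => f (fU ω, fT ω)) g (fun ω hω => hfg ω hω)
    intro v t' z'
    have rel : prEq μ (fun ω => (fV ω, fT ω, fZ ω)) (v, t', z')
        = prEq μ (fun ω => (fT ω, fV ω, fZ ω)) (t', v, z') :=
      (prEq_comp_inj μ (fun ω => (fT ω, fV ω, fZ ω))
        (fun p => (p.2.1, p.1, p.2.2))
        (fun p p' hp => by
          obtain ⟨t1, v1, z1⟩ := p; obtain ⟨t2, v2, z2⟩ := p'
          simp_all [Prod.ext_iff]) (t', v, z'))
    rw [rel, fact2 t' v z']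
    ring
  -- Claim A: the conditional distribution of Q given T equals that given Z, a.s.
  have claimA : ∀ ω, 0 < μ.p ω →
      (fun q => prEq μ (fun ω' => (fT ω', f (fU ω', fT ω'))) (fT ω, q) / prEq μ fT (fT ω))
      = (fun q => prEq μ (fun ω' => (fZ ω', f (fU ω', fT ω'))) (fZ ω, q) / prEq μ fZ (fZ ω)) := by
    intro ω hω
    funext q
    have hpt : 0 < prEq μ fT (fT ω) := lt_of_lt_of_le hω (le_prEq μ fT ω)
    have hpz : 0 < prEq μ fZ (fZ ω) := lt_of_lt_of_le hω (le_prEq μ fZ ω)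
    have hptz : 0 < prEq μ (fun ω' => (fT ω', fZ ω')) (fT ω, fZ ω) :=
      lt_of_lt_of_le hω (le_prEq μ (fun ω' => (fT ω', fZ ω')) ω)
    have s1 := star1 (fT ω) (fZ ω) q
    have s2 := star2 (fZ ω) (fT ω) q
    have rel2 : prEq μ (fun ω' => (fZ ω', fT ω', f (fU ω', fT ω'))) (fZ ω, fT ω, q)
        = prEq μ (fun ω' => (fT ω', fZ ω', f (fU ω', fT ω'))) (fT ω, fZ ω, q) :=
      prEq_comp_inj μ (fun ω' => (fT ω', fZ ω', f (fU ω', fT ω')))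
        (fun p => (p.2.1, p.1, p.2.2)) (fun p p' hp => by
          obtain ⟨a1, b1, c1⟩ := p; obtain ⟨a2, b2, c2⟩ := p'
          simp_all [Prod.ext_iff]) (fT ω, fZ ω, q)
    have rel1 : prEq μ (fun ω' => (fZ ω', fT ω')) (fZ ω, fT ω)
        = prEq μ (fun ω' => (fT ω', fZ ω')) (fT ω, fZ ω) := prEq_swap μ fZ fT (fZ ω) (fT ω)
    rw [rel2] at s2
    rw [rel1] at s1
    rw [div_eq_div_iff hpt.ne' hpz.ne']
    apply mul_right_cancel₀ hptz.ne'
    linear_combination (-(prEq μ fZ (fZ ω))) * s1 + (prEq μ fT (fT ω)) * s2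
  -- the common-part encoding
  let αf : T → (Fin n → ℝ) :=
    fun t q => prEq μ (fun ω => (fT ω, f (fU ω, fT ω))) (t, q) / prEq μ fT t
  let βf : Z → (Fin n → ℝ) :=
    fun z q => prEq μ (fun ω => (fZ ω, f (fU ω, fT ω))) (z, q) / prEq μ fZ z
  let Dset : Finset (Fin n → ℝ) := Finset.image αf Finset.univ ∪ Finset.image βf Finset.univ
  let m : ℕ := Fintype.card {v // v ∈ Dset}
  let eqv : {v // v ∈ Dset} ≃ Fin m := Fintype.equivFin _
  have hmemα : ∀ t, αf t ∈ Dset :=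
    fun t => Finset.mem_union_left _ (Finset.mem_image_of_mem αf (Finset.mem_univ t))
  have hmemβ : ∀ z, βf z ∈ Dset :=
    fun z => Finset.mem_union_right _ (Finset.mem_image_of_mem βf (Finset.mem_univ z))
  let c : T → Fin m := fun t => eqv ⟨αf t, hmemα t⟩
  let c' : Z → Fin m := fun z => eqv ⟨βf z, hmemβ z⟩
  have hcc' : ∀ ω, 0 < μ.p ω → c (fT ω) = c' (fZ ω) := by
    intro ω hω
    show eqv ⟨αf (fT ω), hmemα (fT ω)⟩ = eqv ⟨βf (fZ ω), hmemβ (fZ ω)⟩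
    exact congrArg eqv (Subtype.ext (claimA ω hω))
  have hcinj : ∀ t t', c t = c t' → αf t = αf t' :=
    fun t t' h => congrArg Subtype.val (eqv.injective h)
  -- Claim B: I(T;Q|C) = 0
  have cmi5 : condMutInf μ fT (fun ω => f (fU ω, fT ω)) (fun ω => c (fT ω)) = 0 := by
    apply condMutInf_eq_zero_of_factorization
    intro t q k
    beta_reduce
    have P1 : prEq μ (fun ω => (fT ω, f (fU ω, fT ω), c (fT ω))) (t, q, k)
        = if c t = k then prEq μ (fun ω => (fT ω, f (fU ω, fT ω))) (t, q) else 0 := by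
      by_cases hk : c t = k
      · rw [if_pos hk, ← hk]
        exact prEq_comp_inj μ (fun ω => (fT ω, f (fU ω, fT ω)))
          (fun p => (p.1, p.2, c p.1)) (fun p p' hp => by
            obtain ⟨a1, b1⟩ := p; obtain ⟨a2, b2⟩ := p'
            simp_all [Prod.ext_iff]) (t, q)
      · rw [if_neg hk]
        exact prEq_eq_zero_of_not_range μ (fun ω => (fT ω, f (fU ω, fT ω)))
          (fun p => (p.1, p.2, c p.1)) (t, q, k)
          (fun p hp => hk (by
            obtain ⟨a, b⟩ := p
            obtain ⟨h1', h2', h3'⟩ : a = t ∧ b = q ∧ c a = k := by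
              simpa [Prod.ext_iff] using hp
            rw [← h1']; exact h3'))
    have P2 : prEq μ (fun ω => (fT ω, c (fT ω))) (t, k)
        = if c t = k then prEq μ fT t else 0 := by
      by_cases hk : c t = k
      · rw [if_pos hk, ← hk]
        exact prEq_comp_inj μ fT (fun t' => (t', c t'))
          (fun p p' hp => (Prod.ext_iff.mp hp).1) (t)
      · rw [if_neg hk]
        exact prEq_eq_zero_of_not_range μ fT (fun t' => (t', c t')) (t, k)
          (fun t' hp => hk (by
            obtain ⟨h1', h2'⟩ : t' = t ∧ c t' = k := by simpa [Prod.ext_iff] using hp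
            rw [← h1']; exact h2'))
    have P3 := prEq_comp μ fT c k
    have P4 := prEq_fiber μ fT (fun ω => f (fU ω, fT ω)) (fun t' _ => c t') q k
    rw [P1, P2, P3, P4]
    by_cases hk : c t = k
    · rw [if_pos hk, if_pos hk, Finset.mul_sum, Finset.mul_sum]
      apply Finset.sum_congr rfl; intro t' _
      by_cases hk' : c t' = k
      · rw [if_pos hk', if_pos hk']
        have hαα : αf t = αf t' := hcinj t t' (hk.trans hk'.symm)
        rcases eq_or_lt_of_le (prEq_nonneg μ fT t) with h0 | h0
        · have hz : prEq μ (fun ω => (fT ω, f (fU ω, fT ω))) (t, q) = 0 :=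
            le_antisymm ((prEq_pair_le_left μ fT (fun ω => f (fU ω, fT ω)) t q).trans
              (le_of_eq h0.symm)) (prEq_nonneg μ _ _)
          rw [hz, ← h0]; ring
        · rcases eq_or_lt_of_le (prEq_nonneg μ fT t') with h0' | h0'
          · have hz' : prEq μ (fun ω => (fT ω, f (fU ω, fT ω))) (t', q) = 0 :=
              le_antisymm ((prEq_pair_le_left μ fT (fun ω => f (fU ω, fT ω)) t' q).trans
                (le_of_eq h0'.symm)) (prEq_nonneg μ _ _)
            rw [hz', ← h0']; ring
          · have h5 : prEq μ (fun ω => (fT ω, f (fU ω, fT ω))) (t, q) / prEq μ fT t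
                = prEq μ (fun ω => (fT ω, f (fU ω, fT ω))) (t', q) / prEq μ fT t' :=
              congrFun hαα q
            rw [div_eq_div_iff h0.ne' h0'.ne'] at h5
            linarith [h5]
      · rw [if_neg hk', if_neg hk']; ring
    · rw [if_neg hk, if_neg hk]; ring
  -- membership of H(C) in the (T,Z) GK set
  have hbdd' : BddAbove {h : ℝ | ∃ (n' : ℕ) (f' : T → Fin n') (g' : Z → Fin n'),
      (∀ ω, 0 < μ.p ω → f' (fT ω) = g' (fZ ω)) ∧ h = ent μ (fun ω => f' (fT ω))} := by
    refine ⟨ent μ fT, ?_⟩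
    rintro h ⟨n', f', g', -, rfl⟩
    exact ent_comp_le μ fT f'
  have hCle : ent μ (fun ω => c (fT ω)) ≤ gkInf μ fT fZ := by
    unfold gkInf
    exact le_csSup hbdd' ⟨m, c, c', hcc', rfl⟩
  -- entropy identities
  have ea1 : ent μ (fun ω => ((fU ω, fT ω), f (fU ω, fT ω)))
      = ent μ (fun ω => (fU ω, fT ω)) := ent_pair_det μ f (fun ω _ => rfl)
  have ea2 : ent μ (fun ω => ((fV ω, fZ ω), f (fU ω, fT ω)))
      = ent μ (fun ω => (fV ω, fZ ω)) := ent_pair_det μ g (fun ω hω => hfg ω hω)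
  have ea3 : ent μ (fun ω => ((fU ω, fT ω), ((fV ω, fZ ω), f (fU ω, fT ω))))
      = ent μ (fun ω => ((fU ω, fT ω), (fV ω, fZ ω))) :=
    ent_det_congr μ (fun p => (p.1, p.2.1)) (fun p => (p.1, (p.2, g p.2)))
      (fun ω _ => rfl) (fun ω hω => by beta_reduce; rw [hfg ω hω])
  have Ia : mutInf μ (fun ω => (fU ω, fT ω)) (fun ω => (fV ω, fZ ω))
      = ent μ (fun ω => f (fU ω, fT ω))
        + condMutInf μ (fun ω => (fU ω, fT ω)) (fun ω => (fV ω, fZ ω))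
            (fun ω => f (fU ω, fT ω)) := by
    unfold mutInf condMutInf
    beta_reduce
    rw [ea1, ea2, ea3]; ring
  have eb1 : ent μ (fun ω => ((fU ω, fT ω), (fT ω, f (fU ω, fT ω))))
      = ent μ (fun ω => ((fU ω, fT ω), f (fU ω, fT ω))) :=
    ent_det_congr μ (fun p => (p.1, p.2.2)) (fun p => (p.1, (p.1.2, p.2)))
      (fun ω _ => rfl) (fun ω _ => rfl)
  have eb2 : ent μ (fun ω => ((fV ω, fZ ω), (fT ω, f (fU ω, fT ω))))
      = ent μ (fun ω => (fT ω, ((fV ω, fZ ω), f (fU ω, fT ω)))) :=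
    ent_det_congr μ (fun p => (p.2.1, (p.1, p.2.2))) (fun p => (p.2.1, (p.1, p.2.2)))
      (fun ω _ => rfl) (fun ω _ => rfl)
  have eb3 : ent μ (fun ω => ((fU ω, fT ω), ((fV ω, fZ ω), (fT ω, f (fU ω, fT ω)))))
      = ent μ (fun ω => ((fU ω, fT ω), ((fV ω, fZ ω), f (fU ω, fT ω)))) :=
    ent_det_congr μ (fun p => (p.1, (p.2.1, p.2.2.2))) (fun p => (p.1, (p.2.1, (p.1.2, p.2.2))))
      (fun ω _ => rfl) (fun ω _ => rfl)
  have Ib : condMutInf μ (fun ω => (fU ω, fT ω)) (fun ω => (fV ω, fZ ω))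
        (fun ω => f (fU ω, fT ω))
      = condMutInf μ fT (fun ω => (fV ω, fZ ω)) (fun ω => f (fU ω, fT ω))
        + condMutInf μ (fun ω => (fU ω, fT ω)) (fun ω => (fV ω, fZ ω))
            (fun ω => (fT ω, f (fU ω, fT ω))) := by
    unfold condMutInf
    beta_reduce
    rw [eb1, eb2, eb3]; ring
  have ec2 : ent μ (fun ω => ((fV ω, fZ ω), (fZ ω, f (fU ω, fT ω))))
      = ent μ (fun ω => ((fV ω, fZ ω), f (fU ω, fT ω))) :=
    ent_det_congr μ (fun p => (p.1, p.2.2)) (fun p => (p.1, (p.1.2, p.2)))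
      (fun ω _ => rfl) (fun ω _ => rfl)
  have ec3 : ent μ (fun ω => (fT ω, ((fV ω, fZ ω), (fZ ω, f (fU ω, fT ω)))))
      = ent μ (fun ω => (fT ω, ((fV ω, fZ ω), f (fU ω, fT ω)))) :=
    ent_det_congr μ (fun p => (p.1, (p.2.1, p.2.2.2))) (fun p => (p.1, (p.2.1, (p.2.1.2, p.2.2))))
      (fun ω _ => rfl) (fun ω _ => rfl)
  have Ic : condMutInf μ fT (fun ω => (fV ω, fZ ω)) (fun ω => f (fU ω, fT ω))
      = condMutInf μ fT fZ (fun ω => f (fU ω, fT ω))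
        + condMutInf μ fT (fun ω => (fV ω, fZ ω)) (fun ω => (fZ ω, f (fU ω, fT ω))) := by
    unfold condMutInf
    beta_reduce
    rw [ec2, ec3]; ring
  have ed1 : ent μ (fun ω => (fZ ω, f (fU ω, fT ω)))
      = ent μ (fun ω => (f (fU ω, fT ω), fZ ω)) :=
    ent_det_congr μ Prod.swap Prod.swap (fun ω _ => rfl) (fun ω _ => rfl)
  have ed2 : ent μ (fun ω => (fT ω, (fZ ω, f (fU ω, fT ω))))
      = ent μ (fun ω => (fT ω, (f (fU ω, fT ω), fZ ω))) :=
    ent_det_congr μ (fun p => (p.1, (p.2.2, p.2.1))) (fun p => (p.1, (p.2.2, p.2.1)))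
      (fun ω _ => rfl) (fun ω _ => rfl)
  have Id : condMutInf μ fT fZ (fun ω => f (fU ω, fT ω)) - mutInf μ fT fZ
      = condMutInf μ fT (fun ω => f (fU ω, fT ω)) fZ - mutInf μ fT (fun ω => f (fU ω, fT ω)) := by
    unfold mutInf condMutInf
    beta_reduce
    rw [ed1, ed2]; ring
  have ee1 : ent μ (fun ω => (f (fU ω, fT ω), c (fT ω)))
      = ent μ (fun ω => (c (fT ω), f (fU ω, fT ω))) :=
    ent_det_congr μ Prod.swap Prod.swap (fun ω _ => rfl) (fun ω _ => rfl)
  have ee2 : ent μ (fun ω => (fT ω, c (fT ω))) = ent μ fT := ent_pair_det μ c (fun ω _ => rfl)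
  have ee3 : ent μ (fun ω => (fT ω, (f (fU ω, fT ω), c (fT ω))))
      = ent μ (fun ω => (fT ω, f (fU ω, fT ω))) :=
    ent_det_congr μ (fun p => (p.1, p.2.1)) (fun p => (p.1, (p.2, c p.1)))
      (fun ω _ => rfl) (fun ω _ => rfl)
  have Ie : mutInf μ fT (fun ω => f (fU ω, fT ω))
      = mutInf μ (fun ω => c (fT ω)) (fun ω => f (fU ω, fT ω))
        + condMutInf μ fT (fun ω => f (fU ω, fT ω)) (fun ω => c (fT ω)) := by
    unfold mutInf condMutInf
    beta_reduce
    rw [ee1, ee2, ee3]; ring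
  have hle : ent μ (fun ω => f (fU ω, fT ω))
      ≤ ent μ (fun ω => (c (fT ω), f (fU ω, fT ω))) :=
    ent_comp_le μ (fun ω => (c (fT ω), f (fU ω, fT ω))) Prod.snd
  have Ih : mutInf μ (fun ω => c (fT ω)) (fun ω => f (fU ω, fT ω))
      ≤ ent μ (fun ω => c (fT ω)) := by
    unfold mutInf
    beta_reduce
    linarith [hle]
  have g2 : 0 ≤ condMutInf μ (fun ω => (fU ω, fT ω)) (fun ω => (fV ω, fZ ω))
      (fun ω => (fT ω, f (fU ω, fT ω))) := condMutInf_nonneg μ _ _ _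
  have g3 : 0 ≤ condMutInf μ fT (fun ω => (fV ω, fZ ω))
      (fun ω => (fZ ω, f (fU ω, fT ω))) := condMutInf_nonneg μ _ _ _
  have g4 : 0 ≤ condMutInf μ fT (fun ω => f (fU ω, fT ω)) fZ := condMutInf_nonneg μ _ _ _
  linarith

end KeyBound



/-- Secure data processing inequality: if `I(U;Z|T) = 0` and `I(T;V|Z) = 0`,
then `RI((U,T);(V,Z)) ≥ RI(T;Z)`. -/
theorem secure_data_processing {T U V Z : Type}
    [Fintype T] [Fintype U] [Fintype V] [Fintype Z]
    (μ : FinProb Ω) (fT : Ω → T) (fU : Ω → U) (fV : Ω → V) (fZ : Ω → Z)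
    (h1 : condMutInf μ fU fZ fT = 0) (h2 : condMutInf μ fT fV fZ = 0) :
    resInf μ (fun ω => (fU ω, fT ω)) (fun ω => (fV ω, fZ ω)) ≥ resInf μ fT fZ := by
  unfold resInf
  have hsup : gkInf μ (fun ω => (fU ω, fT ω)) (fun ω => (fV ω, fZ ω))
      ≤ mutInf μ (fun ω => (fU ω, fT ω)) (fun ω => (fV ω, fZ ω))
        - mutInf μ fT fZ + gkInf μ fT fZ := by
    unfold gkInf
    apply csSup_le
    · exact ⟨ent μ (fun _ => (0 : Fin 1)), 1, fun _ => 0, fun _ => 0, fun _ _ => rfl, rfl⟩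
    · rintro h' ⟨n, f, g, hfg, rfl⟩
      have := key_bound μ fT fU fV fZ h1 h2 n f g hfg
      unfold gkInf at this
      exact this
  linarith
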